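/- Let a₁, …, a_{2n+2} be pairwise distinct complex numbers with a_ℓ² ≠ a_k² for ℓ ≠ k. Then Σ_{S ⊆ {1,…,2n+2}, |S| = n} [ ∏_{j∈S} a_j / ∏_{j∈S} ∏_{ℓ∉S} (a_ℓ² − a_j²) ] multiplied by ∏_{1 ≤ ℓ < k ≤ 2n+2} (a_ℓ + a_k) is a polynomial identity: it equals (−1)^{n(n+1)/2} · Σ_{ℓ=1}^{2n+2} a_ℓ. In particular, for n = 2 and pairwise distinct a₁,…,a₆ with distinct squares: Σ_{1≤ℓ₁<ℓ₂≤6} a_{ℓ₁} a_{ℓ₂} / ∏_{j∈{ℓ₁,ℓ₂}} ∏_{ℓ∉{ℓ₁,ℓ₂}} (a_ℓ² − a_j²) = −(a₁+⋯+a₆) / ∏_{1≤ℓ<k≤6} (a_ℓ + a_k). -/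

import Mathlib

open Finset

namespace RCn

/-! ### Generic product / sign lemmas -/

lemma prod_pairs {N : ℕ} {M : Type*} [CommMonoid M] (f : Fin N → Fin N → M) :
    ∏ p ∈ Finset.univ.filter (fun p : Fin N × Fin N => p.1 < p.2), f p.1 p.2 =
      ∏ i, ∏ j ∈ Finset.Ioi i, f i j := by
  rw [Finset.prod_filter, Fintype.prod_prod_type]
  refine Finset.prod_congr rfl fun i _ => ?_
  rw [show Finset.Ioi i = Finset.univ.filter (fun j => i < j) by ext j; simp,
    Finset.prod_filter]

def sumE {m k N : ℕ} (h : m + k = N) : Fin m ⊕ Fin k ≃ Fin N :=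
  finSumFinEquiv.trans (finCongr h)

@[simp] lemma sumE_inl {m k N : ℕ} (h : m + k = N) (i : Fin m) :
    ((sumE h (Sum.inl i)) : ℕ) = (i : ℕ) := by simp [sumE]

@[simp] lemma sumE_inr {m k N : ℕ} (h : m + k = N) (j : Fin k) :
    ((sumE h (Sum.inr j)) : ℕ) = m + (j : ℕ) := by simp [sumE]

lemma sumE_lt_ll {m k N : ℕ} (h : m + k = N) (i j : Fin m) :
    (sumE h (Sum.inl i) < sumE h (Sum.inl j)) ↔ i < j := by
  simp only [Fin.lt_def, sumE_inl]

lemma sumE_lt_lr {m k N : ℕ} (h : m + k = N) (i : Fin m) (j : Fin k) :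
    (sumE h (Sum.inl i) < sumE h (Sum.inr j)) ↔ True := by
  have := i.isLt
  simp only [Fin.lt_def, sumE_inl, sumE_inr, iff_true]
  omega

lemma sumE_lt_rl {m k N : ℕ} (h : m + k = N) (i : Fin k) (j : Fin m) :
    (sumE h (Sum.inr i) < sumE h (Sum.inl j)) ↔ False := by
  have := j.isLt
  simp only [Fin.lt_def, sumE_inl, sumE_inr, iff_false, not_lt]
  omega

lemma sumE_lt_rr {m k N : ℕ} (h : m + k = N) (i j : Fin k) :
    (sumE h (Sum.inr i) < sumE h (Sum.inr j)) ↔ i < j := by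
  simp only [Fin.lt_def, sumE_inr]
  omega

/-- splitting a product over ordered pairs along a 2-block decomposition -/
lemma prod_Ioi_split {m k N : ℕ} (h : m + k = N) {M : Type*} [CommMonoid M]
    (g : Fin m ⊕ Fin k ≃ Fin N) (f : Fin N → Fin N → M) :
    (∏ i, ∏ j ∈ Finset.Ioi i,
        f (((sumE h).symm.trans g) i) (((sumE h).symm.trans g) j)) =
      ((∏ i : Fin m, ∏ j ∈ Finset.Ioi i, f (g (Sum.inl i)) (g (Sum.inl j))) *
        ∏ i : Fin k, ∏ j ∈ Finset.Ioi i, f (g (Sum.inr i)) (g (Sum.inr j))) *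
      ∏ i : Fin m, ∏ j : Fin k, f (g (Sum.inl i)) (g (Sum.inr j)) := by
  have hπ : ∀ u, ((sumE h).symm.trans g) (sumE h u) = g u := fun u => by
    rw [Equiv.trans_apply, Equiv.symm_apply_apply]
  have hIoi : ∀ {p : ℕ} (i : Fin p), Finset.Ioi i = Finset.univ.filter (fun j => i < j) := by
    intro p i; ext j; simp
  rw [← prod_pairs (fun i j => f (((sumE h).symm.trans g) i) (((sumE h).symm.trans g) j)),
    Finset.prod_filter, Fintype.prod_prod_type,
    ← Equiv.prod_comp (sumE h) (fun x => ∏ y : Fin N,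
      if x < y then f (((sumE h).symm.trans g) x) (((sumE h).symm.trans g) y) else 1)]
  have hmid : ∀ u : Fin m ⊕ Fin k, (∏ y : Fin N, if sumE h u < y
        then f (((sumE h).symm.trans g) (sumE h u)) (((sumE h).symm.trans g) y) else 1)
      = ∏ v : Fin m ⊕ Fin k, if sumE h u < sumE h v then f (g u) (g v) else 1 := by
    intro u
    rw [← Equiv.prod_comp (sumE h) (fun y => if sumE h u < y
      then f (((sumE h).symm.trans g) (sumE h u)) (((sumE h).symm.trans g) y) else 1)]
    exact Finset.prod_congr rfl fun v _ => by rw [hπ, hπ]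
  rw [Finset.prod_congr rfl (fun u _ => hmid u), Fintype.prod_sum_type]
  simp only [Fintype.prod_sum_type, sumE_lt_ll, sumE_lt_lr, sumE_lt_rl, sumE_lt_rr,
    if_true, if_false, Finset.prod_const_one, one_mul]
  simp only [← Finset.prod_filter]
  simp only [← hIoi]
  rw [Finset.prod_mul_distrib]
  exact mul_right_comm _ _ _

lemma sign_mul_prod {N : ℕ} {R : Type*} [CommRing R] (σ : Equiv.Perm (Fin N)) (v : Fin N → R) :
    ∏ i, ∏ j ∈ Finset.Ioi i, (v (σ j) - v (σ i)) =
      ((Equiv.Perm.sign σ : ℤ) : R) * ∏ i, ∏ j ∈ Finset.Ioi i, (v j - v i) := by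
  have h := Matrix.det_permute σ (Matrix.vandermonde v)
  have h2 : (Matrix.vandermonde v).submatrix (⇑σ) id = Matrix.vandermonde (v ∘ σ) := by
    ext i j; rfl
  rw [h2, Matrix.det_vandermonde, Matrix.det_vandermonde] at h
  exact h

lemma sign_split {m k N : ℕ} (h : m + k = N) {R : Type*} [CommRing R]
    (g : Fin m ⊕ Fin k ≃ Fin N) (v : Fin N → R) :
    ((Equiv.Perm.sign ((sumE h).symm.trans g) : ℤ) : R) *
        ∏ i, ∏ j ∈ Finset.Ioi i, (v j - v i) =
      ((∏ i : Fin m, ∏ j ∈ Finset.Ioi i, (v (g (Sum.inl j)) - v (g (Sum.inl i)))) *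
        ∏ i : Fin k, ∏ j ∈ Finset.Ioi i, (v (g (Sum.inr j)) - v (g (Sum.inr i)))) *
      ∏ i : Fin m, ∏ j : Fin k, (v (g (Sum.inr j)) - v (g (Sum.inl i))) := by
  rw [← sign_mul_prod]
  exact prod_Ioi_split h g (fun p q => v q - v p)

lemma sign_sq {N : ℕ} {R : Type*} [CommRing R] (σ : Equiv.Perm (Fin N)) :
    ((Equiv.Perm.sign σ : ℤ) : R) * ((Equiv.Perm.sign σ : ℤ) : R) = 1 := by
  rcases Int.units_eq_one_or (Equiv.Perm.sign σ) with h | h <;> rw [h] <;> norm_num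

/-! ### The specific setup -/

variable (n : ℕ)

def expo (j : Fin (2*n+2)) : ℕ := if (j : ℕ) = 2*n+1 then 2*n+2 else (j : ℕ)

lemma hNn : n + (n+2) = 2*n+2 := by omega

noncomputable def colE : Fin n ⊕ Fin (n+2) ≃ Fin (2*n+2) :=
  Equiv.ofBijective
    (Sum.elim (fun j : Fin n => (⟨2*(j:ℕ)+1, by omega⟩ : Fin (2*n+2)))
      (fun k : Fin (n+2) => (⟨min (2*(k:ℕ)) (2*n+1), by omega⟩ : Fin (2*n+2))))
    (by
      rw [Fintype.bijective_iff_injective_and_card]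
      constructor
      · rintro (i | i) (j | j) hij <;>
          simp only [Sum.elim_inl, Sum.elim_inr, Fin.mk.injEq] at hij <;>
          · first
            | (congr 1; exact Fin.ext (by omega))
            | (exfalso; omega)
      · simp; omega)

@[simp] lemma colE_inl (j : Fin n) : ((colE n (Sum.inl j)) : ℕ) = 2*(j:ℕ)+1 := rfl
@[simp] lemma colE_inr (k : Fin (n+2)) : ((colE n (Sum.inr k)) : ℕ) = min (2*(k:ℕ)) (2*n+1) := rfl

lemma expo_colE_inl (j : Fin n) : expo n (colE n (Sum.inl j)) = 2*(j:ℕ)+1 := by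
  have := j.isLt; simp [expo]; omega

lemma expo_colE_inr (k : Fin (n+2)) : expo n (colE n (Sum.inr k)) = 2*(k:ℕ) := by
  have := k.isLt
  simp only [expo, colE_inr]
  rcases Nat.lt_or_ge (k:ℕ) (n+1) with h | h
  · have h' : ¬ min (2*(k:ℕ)) (2*n+1) = 2*n+1 := by omega
    simp only [h', if_false]; omega
  · have h' : min (2*(k:ℕ)) (2*n+1) = 2*n+1 := by omega
    simp only [h', if_true, eq_self_iff_true]; omega

lemma odd_expo_iff (j : Fin (2*n+2)) :
    Odd (expo n j) ↔ ∃ i : Fin n, j = colE n (Sum.inl i) := by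
  constructor
  · intro hodd
    obtain ⟨u, rfl⟩ := (colE n).surjective j
    rcases u with i | k
    · exact ⟨i, rfl⟩
    · rw [expo_colE_inr] at hodd; exact absurd hodd (by simp)
  · rintro ⟨i, rfl⟩
    rw [expo_colE_inl]; exact ⟨i, by ring⟩

variable (a : Fin (2*n+2) → ℂ)

noncomputable def G : Matrix (Fin (2*n+2)) (Fin (2*n+2)) ℂ :=
  Matrix.of fun i j => a i ^ expo n j

noncomputable def MS (S : Finset (Fin (2*n+2))) : Matrix (Fin (2*n+2)) (Fin (2*n+2)) ℂ :=
  Matrix.of fun i j =>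
    if i ∈ S then (if Odd (expo n j) then a i ^ expo n j else 0)
    else (if Odd (expo n j) then 0 else a i ^ expo n j)

lemma oddCols_card : (Finset.univ.filter (fun j => Odd (expo n j))).card = n := by
  have him : Finset.univ.filter (fun j => Odd (expo n j)) =
      Finset.image (fun i : Fin n => colE n (Sum.inl i)) Finset.univ := by
    ext j
    simp only [Finset.mem_filter, Finset.mem_univ, true_and, Finset.mem_image]
    rw [odd_expo_iff]
    constructor
    · rintro ⟨i, rfl⟩; exact ⟨i, rfl⟩
    · rintro ⟨i, rfl⟩; exact ⟨i, rfl⟩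
  rw [him, Finset.card_image_of_injective _
    (fun x y hxy => Sum.inl_injective ((colE n).injective hxy))]
  simp

lemma card_compl_S {S : Finset (Fin (2*n+2))} (hS : S.card = n) : Sᶜ.card = n + 2 := by
  rw [Finset.card_compl, hS]; simp; omega

noncomputable def rowE (S : Finset (Fin (2*n+2))) (hS : S.card = n) :
    Fin n ⊕ Fin (n+2) ≃ Fin (2*n+2) :=
  Equiv.ofBijective
    (Sum.elim (fun i => ((S.orderIsoOfFin hS i : S) : Fin (2*n+2)))
      (fun j => ((Sᶜ.orderIsoOfFin (card_compl_S n hS) j : (Sᶜ : Finset (Fin (2*n+2)))) : Fin (2*n+2))))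
    (by
      rw [Fintype.bijective_iff_injective_and_card]
      constructor
      · rintro (i | i) (j | j) hij
        · simp only [Sum.elim_inl] at hij
          congr 1
          exact (S.orderIsoOfFin hS).injective (Subtype.ext hij)
        · exfalso
          simp only [Sum.elim_inl, Sum.elim_inr] at hij
          have h1 := (S.orderIsoOfFin hS i).2
          have h2 := (Sᶜ.orderIsoOfFin (card_compl_S n hS) j).2
          rw [hij] at h1
          exact (Finset.mem_compl.mp h2) h1
        · exfalso
          simp only [Sum.elim_inl, Sum.elim_inr] at hij
          have h1 := (S.orderIsoOfFin hS j).2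
          have h2 := (Sᶜ.orderIsoOfFin (card_compl_S n hS) i).2
          rw [← hij] at h1
          exact (Finset.mem_compl.mp h2) h1
        · simp only [Sum.elim_inr] at hij
          congr 1
          exact (Sᶜ.orderIsoOfFin (card_compl_S n hS)).injective (Subtype.ext hij)
      · simp; omega)

lemma rowE_inl_mem (S : Finset (Fin (2*n+2))) (hS : S.card = n) (i : Fin n) :
    rowE n S hS (Sum.inl i) ∈ S := (S.orderIsoOfFin hS i).2

lemma rowE_inr_mem (S : Finset (Fin (2*n+2))) (hS : S.card = n) (j : Fin (n+2)) :
    rowE n S hS (Sum.inr j) ∈ Sᶜ := (Sᶜ.orderIsoOfFin (card_compl_S n hS) j).2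


lemma det_eq_zero_of_support {N' : ℕ} (M : Matrix (Fin N') (Fin N') ℂ)
    (T C : Finset (Fin N')) (hcard : C.card < T.card)
    (hsupp : ∀ i ∈ T, ∀ j, j ∉ C → M i j = 0) : M.det = 0 := by
  classical
  rw [← Matrix.exists_vecMul_eq_zero_iff]
  have hni : ¬ LinearIndependent ℂ (fun i : T => (fun c : C => M i c)) := by
    intro hli
    have h1 := hli.fintype_card_le_finrank
    rw [Module.finrank_pi] at h1
    simp only [Fintype.card_coe] at h1
    omega
  obtain ⟨cvec, hsum, i0, hi0⟩ := Fintype.not_linearIndependent_iff.mp hni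
  refine ⟨fun i => if hi : i ∈ T then cvec ⟨i, hi⟩ else 0, ?_, ?_⟩
  · intro h0
    apply hi0
    have h2 := congrFun h0 (i0 : Fin N')
    simpa [i0.2] using h2
  · funext j
    have hw : ∀ j', (Matrix.vecMul (fun i => if hi : i ∈ T then cvec ⟨i, hi⟩ else 0) M) j'
        = ∑ i ∈ T.attach, cvec i * M (i : Fin N') j' := by
      intro j'
      rw [Matrix.vecMul, dotProduct,
        ← Finset.sum_subset (Finset.subset_univ T) (fun x _ hx => by simp [hx]),
        ← Finset.sum_attach T (fun i => (if hi : i ∈ T then cvec ⟨i, hi⟩ else 0) * M i j')]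
      refine Finset.sum_congr rfl fun i _ => ?_
      simp [i.2]
    by_cases hj : j ∈ C
    · have h3 := congrFun hsum ⟨j, hj⟩
      simp only [Finset.sum_apply, Pi.smul_apply, smul_eq_mul, Pi.zero_apply] at h3
      rw [Pi.zero_apply, hw]
      rw [Finset.univ_eq_attach] at h3
      exact h3
    · rw [Pi.zero_apply, hw]
      refine Finset.sum_eq_zero fun i _ => ?_
      rw [hsupp (i : Fin N') i.2 j hj, mul_zero]

lemma MS_det_zero (S : Finset (Fin (2*n+2))) (hS : S.card ≠ n) : (MS n a S).det = 0 := by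
  classical
  rcases lt_or_gt_of_ne hS with hlt | hgt
  · refine det_eq_zero_of_support (MS n a S) Sᶜ
      (Finset.univ.filter (fun j => ¬ Odd (expo n j))) ?_ ?_
    · have h1 := oddCols_card n
      have h2 : (Finset.univ.filter (fun j => Odd (expo n j))).card +
          (Finset.univ.filter (fun j => ¬ Odd (expo n j))).card = 2*n+2 := by
        rw [Finset.card_filter_add_card_filter_not]; simp
      have h3 : Sᶜ.card = 2*n+2 - S.card := by
        rw [Finset.card_compl]; simp
      omega
    · intro i hi j hj
      simp only [Finset.mem_filter, Finset.mem_univ, true_and, not_not] at hj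
      simp [MS, Finset.mem_compl.mp hi, hj]
  · refine det_eq_zero_of_support (MS n a S) S
      (Finset.univ.filter (fun j => Odd (expo n j))) ?_ ?_
    · rw [oddCols_card]; exact hgt
    · intro i hi j hj
      simp only [Finset.mem_filter, Finset.mem_univ, true_and] at hj
      simp [MS, hi, hj]

lemma detG_sum : (G n a).det = ∑ S ∈ Finset.powersetCard n Finset.univ, (MS n a S).det := by
  classical
  set m1 : Fin (2*n+2) → Fin (2*n+2) → ℂ :=
    fun i j => if Odd (expo n j) then a i ^ expo n j else 0 with hm1
  set m2 : Fin (2*n+2) → Fin (2*n+2) → ℂ :=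
    fun i j => if Odd (expo n j) then 0 else a i ^ expo n j with hm2
  have hG : G n a = Matrix.of (m1 + m2) := by
    funext i j
    by_cases hodd : Odd (expo n j) <;> simp [G, hm1, hm2, hodd]
  have hMS : ∀ s : Finset (Fin (2*n+2)), (MS n a s) = Matrix.of (s.piecewise m1 m2) := by
    intro s
    funext i j
    by_cases hi : i ∈ s <;> simp [MS, Finset.piecewise, hi, hm1, hm2]
  have h := (Matrix.detRowAlternating (n := Fin (2*n+2)) (R := ℂ)).toMultilinearMap.map_add_univ
    m1 m2
  have h' : (Matrix.of (m1 + m2)).det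
      = ∑ s : Finset (Fin (2*n+2)), (Matrix.of (s.piecewise m1 m2)).det := h
  rw [hG, h']
  rw [show (∑ s : Finset (Fin (2*n+2)), (Matrix.of (s.piecewise m1 m2)).det)
      = ∑ s ∈ Finset.powersetCard n Finset.univ, (Matrix.of (s.piecewise m1 m2)).det from
    (Finset.sum_subset (Finset.subset_univ _) (fun s _ hs => by
      rw [← hMS s]
      exact MS_det_zero n a s (fun hc => hs (Finset.mem_powersetCard_univ.mpr hc)))).symm]
  exact Finset.sum_congr rfl fun s _ => by rw [← hMS s]

lemma prod_over_S {M : Type*} [CommMonoid M] (S : Finset (Fin (2*n+2))) (hS : S.card = n)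
    (f : Fin (2*n+2) → M) :
    ∏ j ∈ S, f j = ∏ i : Fin n, f (rowE n S hS (Sum.inl i)) := by
  rw [← Finset.prod_coe_sort S f]
  exact (Equiv.prod_comp (S.orderIsoOfFin hS).toEquiv (fun t : S => f t)).symm

lemma prod_over_Sc {M : Type*} [CommMonoid M] (S : Finset (Fin (2*n+2))) (hS : S.card = n)
    (f : Fin (2*n+2) → M) :
    ∏ j ∈ Sᶜ, f j = ∏ i : Fin (n+2), f (rowE n S hS (Sum.inr i)) := by
  rw [← Finset.prod_coe_sort Sᶜ f]
  exact (Equiv.prod_comp (Sᶜ.orderIsoOfFin (card_compl_S n hS)).toEquiv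
    (fun t : (Sᶜ : Finset (Fin (2*n+2))) => f t)).symm

noncomputable def sgn {N : ℕ} (σ : Equiv.Perm (Fin N)) : ℂ := ((Equiv.Perm.sign σ : ℤ) : ℂ)

lemma MS_det (S : Finset (Fin (2*n+2))) (hS : S.card = n) :
    (MS n a S).det =
      sgn ((sumE (hNn n)).symm.trans (rowE n S hS)) * sgn ((sumE (hNn n)).symm.trans (colE n)) *
        ((∏ j ∈ S, a j) *
          ((∏ i : Fin n, ∏ j ∈ Finset.Ioi i,
              (a (rowE n S hS (Sum.inl j)) ^ 2 - a (rowE n S hS (Sum.inl i)) ^ 2)) *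
            ∏ i : Fin (n+2), ∏ j ∈ Finset.Ioi i,
              (a (rowE n S hS (Sum.inr j)) ^ 2 - a (rowE n S hS (Sum.inr i)) ^ 2))) := by
  classical
  set πr := (sumE (hNn n)).symm.trans (rowE n S hS) with hπrdef
  set πc := (sumE (hNn n)).symm.trans (colE n) with hπcdef
  have hπr : ∀ u, πr (sumE (hNn n) u) = rowE n S hS u := fun u => by
    rw [hπrdef, Equiv.trans_apply, Equiv.symm_apply_apply]
  have hπc : ∀ u, πc (sumE (hNn n) u) = colE n u := fun u => by
    rw [hπcdef, Equiv.trans_apply, Equiv.symm_apply_apply]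
  have hblock : (MS n a S).submatrix (rowE n S hS) (colE n) = Matrix.fromBlocks
      (Matrix.of fun i j : Fin n =>
        a (rowE n S hS (Sum.inl i)) * (a (rowE n S hS (Sum.inl i)) ^ 2) ^ (j : ℕ))
      0 0
      (Matrix.vandermonde (fun i : Fin (n+2) => a (rowE n S hS (Sum.inr i)) ^ 2)) := by
    ext u v
    rcases u with i | i <;> rcases v with j | j
    · have hmem := rowE_inl_mem n S hS i
      have hodd : Odd (expo n (colE n (Sum.inl j))) := by
        rw [expo_colE_inl]; exact ⟨(j : ℕ), by ring⟩
      show (if rowE n S hS (Sum.inl i) ∈ S then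
          (if Odd (expo n (colE n (Sum.inl j)))
            then a (rowE n S hS (Sum.inl i)) ^ expo n (colE n (Sum.inl j)) else 0)
          else _) = _
      rw [if_pos hmem, if_pos hodd, expo_colE_inl, pow_succ, pow_mul]
      show _ = a (rowE n S hS (Sum.inl i)) * (a (rowE n S hS (Sum.inl i)) ^ 2) ^ (j : ℕ)
      ring
    · have hmem := rowE_inl_mem n S hS i
      have hnodd : ¬ Odd (expo n (colE n (Sum.inr j))) := by
        rw [expo_colE_inr]; simp
      show (if rowE n S hS (Sum.inl i) ∈ S then
          (if Odd (expo n (colE n (Sum.inr j)))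
            then a (rowE n S hS (Sum.inl i)) ^ expo n (colE n (Sum.inr j)) else 0)
          else _) = _
      rw [if_pos hmem, if_neg hnodd]
      rfl
    · have hmem : rowE n S hS (Sum.inr i) ∉ S := Finset.mem_compl.mp (rowE_inr_mem n S hS i)
      have hodd : Odd (expo n (colE n (Sum.inl j))) := by
        rw [expo_colE_inl]; exact ⟨(j : ℕ), by ring⟩
      show (if rowE n S hS (Sum.inr i) ∈ S then _
          else (if Odd (expo n (colE n (Sum.inl j))) then 0
            else a (rowE n S hS (Sum.inr i)) ^ expo n (colE n (Sum.inl j)))) = _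
      rw [if_neg hmem, if_pos hodd]
      rfl
    · have hmem : rowE n S hS (Sum.inr i) ∉ S := Finset.mem_compl.mp (rowE_inr_mem n S hS i)
      have hnodd : ¬ Odd (expo n (colE n (Sum.inr j))) := by
        rw [expo_colE_inr]; simp
      show (if rowE n S hS (Sum.inr i) ∈ S then _
          else (if Odd (expo n (colE n (Sum.inr j))) then 0
            else a (rowE n S hS (Sum.inr i)) ^ expo n (colE n (Sum.inr j)))) = _
      rw [if_neg hmem, if_neg hnodd, expo_colE_inr, pow_mul]
      rfl
  have h1 : ((MS n a S).submatrix (rowE n S hS) (colE n)).det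
      = (((MS n a S).submatrix (⇑πr) (⇑πc)).submatrix (sumE (hNn n)) (sumE (hNn n))).det := by
    congr 1
    ext u v
    simp only [Matrix.submatrix_apply, hπr, hπc]
  rw [Matrix.det_submatrix_equiv_self (sumE (hNn n))] at h1
  have h2 : ((MS n a S).submatrix (⇑πr) (⇑πc)).det =
      ((Equiv.Perm.sign πr : ℤ) : ℂ) * (((Equiv.Perm.sign πc : ℤ) : ℂ) * (MS n a S).det) := by
    have e1 : (MS n a S).submatrix (⇑πr) (⇑πc) =
        ((MS n a S).submatrix id (⇑πc)).submatrix (⇑πr) id := rfl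
    rw [e1, Matrix.det_permute, Matrix.det_permute']
  have hA1 : (Matrix.of fun i j : Fin n =>
        a (rowE n S hS (Sum.inl i)) * (a (rowE n S hS (Sum.inl i)) ^ 2) ^ (j : ℕ)).det
      = (∏ j ∈ S, a j) * ∏ i : Fin n, ∏ j ∈ Finset.Ioi i,
          (a (rowE n S hS (Sum.inl j)) ^ 2 - a (rowE n S hS (Sum.inl i)) ^ 2) := by
    have hm := Matrix.det_mul_column (fun i : Fin n => a (rowE n S hS (Sum.inl i)))
      (Matrix.vandermonde fun i : Fin n => a (rowE n S hS (Sum.inl i)) ^ 2)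
    rw [Matrix.det_vandermonde] at hm
    rw [prod_over_S n S hS a]
    exact hm
  have hfromB : ((MS n a S).submatrix (rowE n S hS) (colE n)).det =
      ((∏ j ∈ S, a j) * ∏ i : Fin n, ∏ j ∈ Finset.Ioi i,
          (a (rowE n S hS (Sum.inl j)) ^ 2 - a (rowE n S hS (Sum.inl i)) ^ 2)) *
        ∏ i : Fin (n+2), ∏ j ∈ Finset.Ioi i,
          (a (rowE n S hS (Sum.inr j)) ^ 2 - a (rowE n S hS (Sum.inr i)) ^ 2) := by
    rw [hblock, Matrix.det_fromBlocks_zero₂₁, hA1, Matrix.det_vandermonde]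
  rw [h1, h2] at hfromB
  have q1 := sign_sq (R := ℂ) πr
  have q2 := sign_sq (R := ℂ) πc
  rw [sgn, sgn]
  linear_combination ((Equiv.Perm.sign πr : ℤ) : ℂ) * ((Equiv.Perm.sign πc : ℤ) : ℂ) * hfromB -
    ((Equiv.Perm.sign πc : ℤ) : ℂ) * ((Equiv.Perm.sign πc : ℤ) : ℂ) * (MS n a S).det * q1 -
    (MS n a S).det * q2


lemma Ioi_castSucc_eq {p : ℕ} (i : Fin p) :
    Finset.Ioi (i.castSucc) = insert (Fin.last p) ((Finset.Ioi i).image Fin.castSucc) := by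
  ext x
  simp only [Finset.mem_Ioi, Finset.mem_insert, Finset.mem_image, Fin.lt_def,
    Fin.coe_castSucc]
  constructor
  · intro hx
    by_cases hxl : (x : ℕ) = p
    · left; exact Fin.ext (by simpa using hxl)
    · right
      have hxp : (x : ℕ) < p := by have := x.isLt; omega
      exact ⟨⟨(x : ℕ), hxp⟩, by simpa using hx, Fin.ext (by simp)⟩
  · rintro (rfl | ⟨y, hy, rfl⟩)
    · have := i.isLt
      simp only [Fin.val_last]
      omega
    · simpa using hy

lemma prod_Ioi_snoc {p : ℕ} {M : Type*} [CommMonoid M] (f : Fin (p+1) → Fin (p+1) → M) :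
    ∏ i, ∏ j ∈ Finset.Ioi i, f i j =
      (∏ i : Fin p, ∏ j ∈ Finset.Ioi i, f i.castSucc j.castSucc) *
      ∏ i : Fin p, f i.castSucc (Fin.last p) := by
  rw [Fin.prod_univ_castSucc (fun i => ∏ j ∈ Finset.Ioi i, f i j)]
  have hlast : Finset.Ioi (Fin.last p) = ∅ := by
    ext x
    simp only [Finset.mem_Ioi, Finset.notMem_empty, iff_false, not_lt, Fin.le_def,
      Fin.val_last]
    have := x.isLt; omega
  rw [hlast, Finset.prod_empty, mul_one]
  have hstep : ∀ i : Fin p, (∏ j ∈ Finset.Ioi (i.castSucc), f i.castSucc j) =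
      (∏ j ∈ Finset.Ioi i, f i.castSucc j.castSucc) * f i.castSucc (Fin.last p) := by
    intro i
    rw [Ioi_castSucc_eq, Finset.prod_insert (by
      simp only [Finset.mem_image, not_exists]
      intro y hy
      have := y.isLt
      exact absurd (congrArg Fin.val hy.2) (by simp; omega)),
      Finset.prod_image (fun x _ y _ h => Fin.castSucc_injective p h)]
    exact mul_comm _ _
  rw [Finset.prod_congr rfl (fun i _ => hstep i), Finset.prod_mul_distrib]

lemma detG_eq : (G n a).det = (∑ i, a i) * ∏ i, ∏ j ∈ Finset.Ioi i, (a j - a i) := by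
  classical
  set w : Fin (2*n+2+1) → Polynomial ℂ :=
    Fin.snoc (fun i => Polynomial.C (a i)) Polynomial.X with hw
  set P := (Matrix.vandermonde w).det with hP
  -- (A) product formula
  have hA : P = Polynomial.C (∏ i, ∏ j ∈ Finset.Ioi i, (a j - a i)) *
      ∏ i : Fin (2*n+2), (Polynomial.X - Polynomial.C (a i)) := by
    rw [hP, Matrix.det_vandermonde w, prod_Ioi_snoc (fun i j => w j - w i)]
    congr 1
    · rw [map_prod]
      refine Finset.prod_congr rfl fun i _ => ?_
      rw [map_prod]
      refine Finset.prod_congr rfl fun j _ => ?_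
      rw [hw, Fin.snoc_castSucc, Fin.snoc_castSucc, map_sub]
    · refine Finset.prod_congr rfl fun i _ => ?_
      rw [hw, Fin.snoc_castSucc, Fin.snoc_last]
  -- (B) row expansion
  have hminor : ∀ j : Fin (2*n+2+1),
      ((Matrix.vandermonde w).submatrix (Fin.last (2*n+2)).succAbove j.succAbove) =
        (Polynomial.C : ℂ →+* Polynomial ℂ).mapMatrix
          (Matrix.of fun i k => a i ^ ((j.succAbove k : Fin (2*n+2+1)) : ℕ)) := by
    intro j
    ext i k
    simp only [Matrix.submatrix_apply, Fin.succAbove_last, Matrix.vandermonde_apply,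
      RingHom.mapMatrix_apply, Matrix.map_apply, Matrix.of_apply, hw, Fin.snoc_castSucc,
      map_pow]
  have hB : P = ∑ j : Fin (2*n+2+1), (-1 : Polynomial ℂ) ^ ((Fin.last (2*n+2) : ℕ) + (j : ℕ)) *
      (Polynomial.X ^ (j : ℕ) *
        Polynomial.C ((Matrix.of fun i k => a i ^ ((j.succAbove k : Fin (2*n+2+1)) : ℕ)).det)) := by
    rw [hP, Matrix.det_succ_row _ (Fin.last (2*n+2))]
    refine Finset.sum_congr rfl fun j _ => ?_
    rw [hminor j, ← RingHom.map_det]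
    rw [show Matrix.vandermonde w (Fin.last (2*n+2)) j = Polynomial.X ^ (j : ℕ) from by
      rw [Matrix.vandermonde_apply, hw, Fin.snoc_last]]
    ring
  -- coefficient extraction at degree 2n+1
  have hcA : P.coeff (2*n+1) = -((∏ i, ∏ j ∈ Finset.Ioi i, (a j - a i)) * ∑ i, a i) := by
    rw [hA, Polynomial.coeff_C_mul]
    have hprodeq : (∏ i : Fin (2*n+2), (Polynomial.X - Polynomial.C (a i)))
        = (Multiset.map (fun t => Polynomial.X - Polynomial.C t)
            (Multiset.map a Finset.univ.val)).prod := by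
      rw [Multiset.map_map]
      rfl
    rw [hprodeq, Multiset.prod_X_sub_C_coeff _ (by simp)]
    have hcard : Multiset.card (Multiset.map a Finset.univ.val) = 2*n+2 := by simp
    rw [hcard]
    have h1 : 2*n+2 - (2*n+1) = 1 := by omega
    rw [h1]
    have hesymm : (Multiset.map a Finset.univ.val).esymm 1 = ∑ i, a i := by
      rw [Finset.esymm_map_val, Finset.powersetCard_one, Finset.sum_map]
      simp
    rw [hesymm]
    ring
  have hcB : P.coeff (2*n+1) = -(G n a).det := by
    have hterm : ∀ (m k : ℕ) (d : ℂ) (t : ℕ),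
        ((-1 : Polynomial ℂ) ^ m * (Polynomial.X ^ k * Polynomial.C d)).coeff t
          = (-1 : ℂ) ^ m * d * (if t = k then 1 else 0) := by
      intro m k d t
      rw [show ((-1 : Polynomial ℂ) ^ m * (Polynomial.X ^ k * Polynomial.C d))
          = Polynomial.C ((-1 : ℂ) ^ m * d) * Polynomial.X ^ k from by
        rw [map_mul, map_pow, map_neg, map_one]; ring]
      rw [Polynomial.coeff_C_mul, Polynomial.coeff_X_pow]
    have hGeq : (Matrix.of fun i k =>
        a i ^ (((⟨2*n+1, by omega⟩ : Fin (2*n+2+1)).succAbove k : Fin (2*n+2+1)) : ℕ))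
        = G n a := by
      ext i k
      simp only [Matrix.of_apply, G]
      congr 1
      rcases Nat.lt_or_ge (k : ℕ) (2*n+1) with hk | hk
      · rw [Fin.succAbove_of_castSucc_lt _ _ (by simp [Fin.lt_def]; omega)]
        simp only [Fin.coe_castSucc, expo]
        split_ifs <;> omega
      · have hk' : (k : ℕ) = 2*n+1 := by have := k.isLt; omega
        rw [Fin.succAbove_of_le_castSucc _ _ (by simp [Fin.le_def]; omega)]
        simp only [Fin.val_succ, expo]
        split_ifs <;> omega
    rw [hB, Polynomial.finset_sum_coeff]
    simp only [hterm]
    rw [Finset.sum_eq_single (⟨2*n+1, by omega⟩ : Fin (2*n+2+1))]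
    · rw [hGeq, if_pos rfl,
        show ((Fin.last (2*n+2) : ℕ) + ((⟨2*n+1, by omega⟩ : Fin (2*n+2+1)) : ℕ)) = 4*n+3
          from by simp; omega,
        Odd.neg_one_pow ⟨2*n+1, by ring⟩]
      ring
    · intro b _ hb
      rw [if_neg (fun hc => hb (Fin.ext hc.symm))]
      ring
    · intro hni
      exact absurd (Finset.mem_univ _) hni
  rw [hcA] at hcB
  have := hcB
  linear_combination this

lemma sum_range_gauss : ∀ m : ℕ, 2 * (∑ i ∈ Finset.range m, (i+1)) = m * (m+1)
  | 0 => by simp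
  | (m+1) => by
    rw [Finset.sum_range_succ, Nat.mul_add, sum_range_gauss m]
    ring

lemma filter_le_card (i : Fin n) :
    (Finset.univ.filter (fun k : Fin (n+2) => (k : ℕ) ≤ (i : ℕ))).card = (i : ℕ) + 1 := by
  have hi := i.isLt
  have him : Finset.univ.filter (fun k : Fin (n+2) => (k : ℕ) ≤ (i : ℕ)) =
      Finset.image (fun t : Fin ((i : ℕ)+1) => (⟨(t : ℕ), by have := t.isLt; omega⟩ : Fin (n+2)))
        Finset.univ := by
    ext k
    simp only [Finset.mem_filter, Finset.mem_univ, true_and, Finset.mem_image]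
    constructor
    · intro hk
      exact ⟨⟨(k : ℕ), by omega⟩, Fin.ext rfl⟩
    · rintro ⟨t, -, rfl⟩
      have := t.isLt
      simpa using Nat.lt_succ_iff.mp this
  rw [him, Finset.card_image_of_injective _ (fun x y hxy => Fin.ext (by
    have := congrArg Fin.val hxy
    simpa using this))]
  simp

lemma sign_colE : sgn ((sumE (hNn n)).symm.trans (colE n)) = (-1 : ℂ) ^ (n * (n+1) / 2) := by
  classical
  set v : Fin (2*n+2) → ℚ := fun t => ((t : ℕ) : ℚ) with hv
  have hsplit := sign_split (hNn n) (colE n) v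
  have hΔ : 0 < ∏ i, ∏ j ∈ Finset.Ioi i, (v j - v i) := by
    refine Finset.prod_pos fun i _ => Finset.prod_pos fun j hj => ?_
    have hij : (i : ℕ) < (j : ℕ) := Fin.lt_def.mp (Finset.mem_Ioi.mp hj)
    simp only [hv, sub_pos]
    exact_mod_cast hij
  have hB1 : 0 < ∏ i : Fin n, ∏ j ∈ Finset.Ioi i,
      (v (colE n (Sum.inl j)) - v (colE n (Sum.inl i))) := by
    refine Finset.prod_pos fun i _ => Finset.prod_pos fun j hj => ?_
    have hij : (i : ℕ) < (j : ℕ) := Fin.lt_def.mp (Finset.mem_Ioi.mp hj)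
    simp only [hv, colE_inl, sub_pos]
    exact_mod_cast (by omega : 2*(i:ℕ)+1 < 2*(j:ℕ)+1)
  have hB2 : 0 < ∏ i : Fin (n+2), ∏ j ∈ Finset.Ioi i,
      (v (colE n (Sum.inr j)) - v (colE n (Sum.inr i))) := by
    refine Finset.prod_pos fun i _ => Finset.prod_pos fun j hj => ?_
    have hij : (i : ℕ) < (j : ℕ) := Fin.lt_def.mp (Finset.mem_Ioi.mp hj)
    have hjlt := j.isLt
    simp only [hv, colE_inr, sub_pos]
    exact_mod_cast (by omega : min (2*(i:ℕ)) (2*n+1) < min (2*(j:ℕ)) (2*n+1))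
  set Q : Fin n → ℚ := fun i =>
    (∏ k ∈ Finset.univ.filter (fun k : Fin (n+2) => (k : ℕ) ≤ (i : ℕ)),
      (v (colE n (Sum.inl i)) - v (colE n (Sum.inr k)))) *
    ∏ k ∈ Finset.univ.filter (fun k : Fin (n+2) => ¬ (k : ℕ) ≤ (i : ℕ)),
      (v (colE n (Sum.inr k)) - v (colE n (Sum.inl i))) with hQdef
  have hQpos : ∀ i : Fin n, 0 < Q i := by
    intro i
    have hin := i.isLt
    refine mul_pos (Finset.prod_pos fun k hk => ?_) (Finset.prod_pos fun k hk => ?_)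
    · have hki : (k : ℕ) ≤ (i : ℕ) := (Finset.mem_filter.mp hk).2
      simp only [hv, colE_inl, colE_inr, sub_pos]
      exact_mod_cast (by omega : min (2*(k:ℕ)) (2*n+1) < 2*(i:ℕ)+1)
    · have hki : ¬ (k : ℕ) ≤ (i : ℕ) := (Finset.mem_filter.mp hk).2
      have hklt := k.isLt
      simp only [hv, colE_inl, colE_inr, sub_pos]
      exact_mod_cast (by omega : 2*(i:ℕ)+1 < min (2*(k:ℕ)) (2*n+1))
  have hCi : ∀ i : Fin n, (∏ k : Fin (n+2), (v (colE n (Sum.inr k)) - v (colE n (Sum.inl i))))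
      = (-1 : ℚ) ^ ((i : ℕ) + 1) * Q i := by
    intro i
    rw [← Finset.prod_filter_mul_prod_filter_not Finset.univ
      (fun k : Fin (n+2) => (k : ℕ) ≤ (i : ℕ))]
    have h1 : (∏ k ∈ Finset.univ.filter (fun k : Fin (n+2) => (k : ℕ) ≤ (i : ℕ)),
        (v (colE n (Sum.inr k)) - v (colE n (Sum.inl i))))
        = ∏ k ∈ Finset.univ.filter (fun k : Fin (n+2) => (k : ℕ) ≤ (i : ℕ)),
          ((-1) * (v (colE n (Sum.inl i)) - v (colE n (Sum.inr k)))) :=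
      Finset.prod_congr rfl fun k _ => by ring
    rw [h1, Finset.prod_mul_distrib, Finset.prod_const, filter_le_card n i, hQdef]
    ring
  have hCr : (∏ i : Fin n, ∏ k : Fin (n+2), (v (colE n (Sum.inr k)) - v (colE n (Sum.inl i))))
      = (-1 : ℚ) ^ (n*(n+1)/2) * ∏ i : Fin n, Q i := by
    rw [Finset.prod_congr rfl (fun i _ => hCi i), Finset.prod_mul_distrib,
      Finset.prod_pow_eq_pow_sum]
    have hexp : (∑ i : Fin n, ((i : ℕ) + 1)) = n*(n+1)/2 := by
      rw [Fin.sum_univ_eq_sum_range (fun t => t+1) n]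
      have := sum_range_gauss n
      omega
    rw [hexp]
  rw [hCr] at hsplit
  have hQ : 0 < ∏ i : Fin n, Q i := Finset.prod_pos fun i _ => hQpos i
  have key : ((Equiv.Perm.sign ((sumE (hNn n)).symm.trans (colE n)) : ℤ) : ℚ)
      = (-1 : ℚ) ^ (n*(n+1)/2) := by
    rcases Int.units_eq_one_or (Equiv.Perm.sign ((sumE (hNn n)).symm.trans (colE n))) with h | h <;>
      rw [h] at hsplit ⊢ <;>
      rcases Nat.even_or_odd (n*(n+1)/2) with hpar | hpar <;>
      simp only [hpar.neg_one_pow] at hsplit ⊢ <;>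
      push_cast at hsplit ⊢ <;>
      first
        | rfl
        | (exfalso; nlinarith [mul_pos (mul_pos hB1 hB2) hQ, hΔ])
  have hint : (Equiv.Perm.sign ((sumE (hNn n)).symm.trans (colE n)) : ℤ)
      = (-1 : ℤ) ^ (n*(n+1)/2) := by exact_mod_cast key
  rw [sgn, hint]
  push_cast
  ring


lemma sgn_mul_self {N : ℕ} (σ : Equiv.Perm (Fin N)) : sgn σ * sgn σ = 1 := sign_sq σ

theorem main1 (hdist : ∀ ℓ k, ℓ ≠ k → a ℓ ≠ a k) (hsq : ∀ ℓ k, ℓ ≠ k → a ℓ ^ 2 ≠ a k ^ 2) :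
    (∑ S ∈ Finset.powersetCard n (Finset.univ : Finset (Fin (2*n+2))),
        (∏ j ∈ S, a j) / (∏ j ∈ S, ∏ ℓ ∈ Sᶜ, (a ℓ ^ 2 - a j ^ 2))) *
      ∏ p ∈ Finset.univ.filter (fun p : Fin (2*n+2) × Fin (2*n+2) => p.1 < p.2), (a p.1 + a p.2) =
      (-1 : ℂ) ^ (n * (n+1) / 2) * ∑ ℓ, a ℓ := by
  have hΔa_ne : (∏ i, ∏ j ∈ Finset.Ioi i, (a j - a i)) ≠ 0 := by
    rw [Finset.prod_ne_zero_iff]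
    intro i _
    rw [Finset.prod_ne_zero_iff]
    intro j hj
    exact sub_ne_zero.mpr (hdist j i (ne_of_gt (Finset.mem_Ioi.mp hj)))
  have hP : (∏ p ∈ Finset.univ.filter
        (fun p : Fin (2*n+2) × Fin (2*n+2) => p.1 < p.2), (a p.1 + a p.2))
      = ∏ i, ∏ j ∈ Finset.Ioi i, (a i + a j) := prod_pairs (fun i j => a i + a j)
  have hΔX : (∏ i, ∏ j ∈ Finset.Ioi i, (a j ^ 2 - a i ^ 2)) =
      (∏ i, ∏ j ∈ Finset.Ioi i, (a j - a i)) * ∏ i, ∏ j ∈ Finset.Ioi i, (a i + a j) := by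
    rw [← Finset.prod_mul_distrib]
    refine Finset.prod_congr rfl fun i _ => ?_
    rw [← Finset.prod_mul_distrib]
    exact Finset.prod_congr rfl fun j _ => by ring
  have key : (∑ S ∈ Finset.powersetCard n (Finset.univ : Finset (Fin (2*n+2))),
        (∏ j ∈ S, a j) / (∏ j ∈ S, ∏ ℓ ∈ Sᶜ, (a ℓ ^ 2 - a j ^ 2))) *
      (∏ i, ∏ j ∈ Finset.Ioi i, (a j ^ 2 - a i ^ 2)) =
      sgn ((sumE (hNn n)).symm.trans (colE n)) * (G n a).det := by
    rw [Finset.sum_mul, detG_sum, Finset.mul_sum]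
    refine Finset.sum_congr rfl fun S hSmem => ?_
    have hS : S.card = n := Finset.mem_powersetCard_univ.mp hSmem
    have hsplit := sign_split (hNn n) (rowE n S hS) (fun i => a i ^ 2)
    have hD : (∏ j ∈ S, ∏ ℓ ∈ Sᶜ, (a ℓ ^ 2 - a j ^ 2)) =
        ∏ i : Fin n, ∏ j : Fin (n+2),
          (a (rowE n S hS (Sum.inr j)) ^ 2 - a (rowE n S hS (Sum.inl i)) ^ 2) := by
      rw [prod_over_S n S hS (fun j => ∏ ℓ ∈ Sᶜ, (a ℓ ^ 2 - a j ^ 2))]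
      exact Finset.prod_congr rfl fun i _ =>
        prod_over_Sc n S hS (fun ℓ => a ℓ ^ 2 - a (rowE n S hS (Sum.inl i)) ^ 2)
    have hD_ne : (∏ j ∈ S, ∏ ℓ ∈ Sᶜ, (a ℓ ^ 2 - a j ^ 2)) ≠ 0 := by
      rw [Finset.prod_ne_zero_iff]
      intro i hi
      rw [Finset.prod_ne_zero_iff]
      intro j hj
      refine sub_ne_zero.mpr (hsq j i fun hji => ?_)
      exact (Finset.mem_compl.mp hj) (hji ▸ hi)
    rw [← hD] at hsplit
    rw [MS_det n a S hS]
    have hΔX2 : (∏ i, ∏ j ∈ Finset.Ioi i, (a j ^ 2 - a i ^ 2)) =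
        ((Equiv.Perm.sign ((sumE (hNn n)).symm.trans (rowE n S hS)) : ℤ) : ℂ) *
          (((∏ i : Fin n, ∏ j ∈ Finset.Ioi i,
              (a (rowE n S hS (Sum.inl j)) ^ 2 - a (rowE n S hS (Sum.inl i)) ^ 2)) *
            ∏ i : Fin (n+2), ∏ j ∈ Finset.Ioi i,
              (a (rowE n S hS (Sum.inr j)) ^ 2 - a (rowE n S hS (Sum.inr i)) ^ 2)) *
          (∏ j ∈ S, ∏ ℓ ∈ Sᶜ, (a ℓ ^ 2 - a j ^ 2))) := by
      have hsq1 := sign_sq (R := ℂ) ((sumE (hNn n)).symm.trans (rowE n S hS))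
      linear_combination ((Equiv.Perm.sign ((sumE (hNn n)).symm.trans (rowE n S hS)) : ℤ) : ℂ) * hsplit -
        (∏ i, ∏ j ∈ Finset.Ioi i, (a j ^ 2 - a i ^ 2)) * hsq1
    have hsq2 := sign_sq (R := ℂ) ((sumE (hNn n)).symm.trans (colE n))
    rw [hΔX2, sgn, sgn]
    field_simp
    linear_combination -(∏ j ∈ S, a j) *
      ((∏ i : Fin n, ∏ j ∈ Finset.Ioi i,
              (a (rowE n S hS (Sum.inl j)) ^ 2 - a (rowE n S hS (Sum.inl i)) ^ 2)) *
            ∏ i : Fin (n+2), ∏ j ∈ Finset.Ioi i,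
              (a (rowE n S hS (Sum.inr j)) ^ 2 - a (rowE n S hS (Sum.inr i)) ^ 2)) * hsq2
  apply mul_right_cancel₀ hΔa_ne
  calc (∑ S ∈ Finset.powersetCard n (Finset.univ : Finset (Fin (2*n+2))),
        (∏ j ∈ S, a j) / (∏ j ∈ S, ∏ ℓ ∈ Sᶜ, (a ℓ ^ 2 - a j ^ 2))) *
      (∏ p ∈ Finset.univ.filter
        (fun p : Fin (2*n+2) × Fin (2*n+2) => p.1 < p.2), (a p.1 + a p.2)) *
      (∏ i, ∏ j ∈ Finset.Ioi i, (a j - a i))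
      = (∑ S ∈ Finset.powersetCard n (Finset.univ : Finset (Fin (2*n+2))),
        (∏ j ∈ S, a j) / (∏ j ∈ S, ∏ ℓ ∈ Sᶜ, (a ℓ ^ 2 - a j ^ 2))) *
        (∏ i, ∏ j ∈ Finset.Ioi i, (a j ^ 2 - a i ^ 2)) := by
        rw [hP, hΔX]; ring
    _ = sgn ((sumE (hNn n)).symm.trans (colE n)) * (G n a).det := key
    _ = (-1 : ℂ) ^ (n * (n+1) / 2) * ((∑ ℓ, a ℓ) * ∏ i, ∏ j ∈ Finset.Ioi i, (a j - a i)) := by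
        rw [sign_colE, detG_eq]
    _ = ((-1 : ℂ) ^ (n * (n+1) / 2) * ∑ ℓ, a ℓ) * ∏ i, ∏ j ∈ Finset.Ioi i, (a j - a i) := by
        ring

end RCn

open RCn in
theorem rational_Cn_polynomial_identity (n : ℕ)
    (a : Fin (2 * n + 2) → ℂ)
    (hdist : ∀ ℓ k, ℓ ≠ k → a ℓ ≠ a k)
    (hsq : ∀ ℓ k, ℓ ≠ k → (a ℓ) ^ 2 ≠ (a k) ^ 2) :
    ((∑ S ∈ Finset.powersetCard n (Finset.univ : Finset (Fin (2 * n + 2))),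
        (∏ j ∈ S, a j) / (∏ j ∈ S, ∏ ℓ ∈ Sᶜ, ((a ℓ) ^ 2 - (a j) ^ 2))) *
      ∏ p ∈ Finset.univ.filter (fun p : Fin (2 * n + 2) × Fin (2 * n + 2) => p.1 < p.2),
        (a p.1 + a p.2) =
      (-1 : ℂ) ^ (n * (n + 1) / 2) * ∑ ℓ, a ℓ) ∧
    (∀ b : Fin 6 → ℂ, (∀ ℓ k, ℓ ≠ k → b ℓ ≠ b k) → (∀ ℓ k, ℓ ≠ k → (b ℓ) ^ 2 ≠ (b k) ^ 2) →
      ∑ S ∈ Finset.powersetCard 2 (Finset.univ : Finset (Fin 6)),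
          (∏ j ∈ S, b j) / (∏ j ∈ S, ∏ ℓ ∈ Sᶜ, ((b ℓ) ^ 2 - (b j) ^ 2)) =
        -(∑ ℓ, b ℓ) /
          ∏ p ∈ Finset.univ.filter (fun p : Fin 6 × Fin 6 => p.1 < p.2), (b p.1 + b p.2)) := by
  constructor
  · exact main1 n a hdist hsq
  · intro b hb hbsq
    have h := main1 2 b hb hbsq
    have hPne : (∏ p ∈ Finset.univ.filter (fun p : Fin 6 × Fin 6 => p.1 < p.2),
        (b p.1 + b p.2)) ≠ 0 := by
      rw [Finset.prod_ne_zero_iff]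
      intro p hp
      have hlt : p.1 < p.2 := (Finset.mem_filter.mp hp).2
      intro h0
      refine hbsq p.1 p.2 (ne_of_lt hlt) ?_
      have : b p.1 = -b p.2 := by linear_combination h0
      rw [this]; ring
    rw [eq_div_iff hPne]
    have h2 : ((-1 : ℂ) ^ (2 * (2 + 1) / 2)) = -1 := by norm_num
    rw [h2] at h
    linear_combination h
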